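/- No real-time general counter machine accepts the language B = {x ∈ L₂ : ⟦x⟧ = 1} of true prefix-notation boolean expressions over values {0,1} and binary operators {∧, ∨}. -/

import Mathlib

/-- A counter update: add an integer, or reset to zero (the ×0 operation). -/
inductive CUpd where
  | add (m : ℤ)
  | reset
deriving DecidableEq

def CUpd.apply : CUpd → ℤ → ℤ
  | .add m, c => c + m
  | .reset, _ => 0

/-- A general real-time counter machine with states `Fin n` and `k` counters. -/
structure CM (σ : Type) (n k : ℕ) where
  q0 : Fin n
  u : σ → Fin n → (Fin k → Bool) → Fin k → CUpd
  δ : σ → Fin n → (Fin k → Bool) → Fin n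
  F : Set (Fin n × (Fin k → Bool))

/-- Elementwise zero-check: `false` if the counter is 0, `true` otherwise. -/
def zcheck {k : ℕ} (c : Fin k → ℤ) : Fin k → Bool :=
  fun i => decide (c i ≠ 0)

def CM.step {σ : Type} {n k : ℕ} (M : CM σ n k) (cfg : Fin n × (Fin k → ℤ)) (x : σ) :
    Fin n × (Fin k → ℤ) :=
  (M.δ x cfg.1 (zcheck cfg.2), fun i => (M.u x cfg.1 (zcheck cfg.2) i).apply (cfg.2 i))

/-- Real-time run: start at `⟨q₀, 0⟩` and take one transition per input token. -/
def CM.run {σ : Type} {n k : ℕ} (M : CM σ n k) (xs : List σ) : Fin n × (Fin k → ℤ) :=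
  xs.foldl M.step (M.q0, fun _ => 0)

def CM.accepts {σ : Type} {n k : ℕ} (M : CM σ n k) (xs : List σ) : Prop :=
  ((M.run xs).1, zcheck (M.run xs).2) ∈ M.F

def CM.acceptsLang {σ : Type} {n k : ℕ} (M : CM σ n k) (L : Set (List σ)) : Prop :=
  ∀ xs, M.accepts xs ↔ xs ∈ L

/-- An update is incremental if it is `×0` or adds a value in `{-1, 0, +1}`. -/
def CUpd.incremental : CUpd → Prop
  | .add m => m.natAbs ≤ 1
  | .reset => True

/-- A machine is simplified if its updates depend only on the input symbol and
are restricted to `{-1, +0, +1, ×0}`. -/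
def CM.simplified {σ : Type} {n k : ℕ} (M : CM σ n k) : Prop :=
  (∀ x q q' b b', M.u x q b = M.u x q' b') ∧ ∀ x q b i, (M.u x q b i).incremental

/-- The class of languages accepted in real time by general counter machines. -/
def CL (σ : Type) : Set (Set (List σ)) :=
  {L | ∃ n k, ∃ M : CM σ n k, M.acceptsLang L}

inductive BTok where
  | v0
  | v1
  | opAnd
  | opOr
deriving DecidableEq

/-- Compositional evaluation of prefix-notation boolean expressions. -/
inductive BEval : List BTok → Bool → Prop
  | val0 : BEval [BTok.v0] false
  | val1 : BEval [BTok.v1] true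
  | eand {e₁ e₂ : List BTok} {b₁ b₂ : Bool} :
      BEval e₁ b₁ → BEval e₂ b₂ → BEval (BTok.opAnd :: e₁ ++ e₂) (b₁ && b₂)
  | eor {e₁ e₂ : List BTok} {b₁ b₂ : Bool} :
      BEval e₁ b₁ → BEval e₂ b₂ → BEval (BTok.opOr :: e₁ ++ e₂) (b₁ || b₂)

namespace Stmt14Aux

instance : Fintype BTok :=
  ⟨⟨{BTok.v0, BTok.v1, BTok.opAnd, BTok.opOr}, by decide⟩, by intro x; cases x <;> decide⟩

def tokOf (b : Bool) : BTok := if b then .v1 else .v0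
def opOf (o : Bool) : BTok := if o then .opAnd else .opOr
def bapp (o x v : Bool) : Bool := if o then x && v else x || v
def idv (o : Bool) : Bool := if o then true else false

def V : List (Bool × Bool) → Bool → Bool
  | [], b => b
  | (o, v) :: l, b => bapp o (V l b) v

def E : List (Bool × Bool) → Bool → List BTok
  | [], b => [tokOf b]
  | (o, v) :: l, b => opOf o :: (E l b ++ [tokOf v])

lemma beval_tokOf (b : Bool) : BEval [tokOf b] b := by
  cases b
  · exact BEval.val0
  · exact BEval.val1

lemma beval_E (l : List (Bool × Bool)) (b : Bool) : BEval (E l b) (V l b) := by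
  induction l with
  | nil => exact beval_tokOf b
  | cons p l ih =>
    obtain ⟨o, v⟩ := p
    cases o
    · exact BEval.eor ih (beval_tokOf v)
    · exact BEval.eand ih (beval_tokOf v)

lemma E_decomp (l : List (Bool × Bool)) (b : Bool) :
    E l b = (l.map fun p => opOf p.1) ++ (tokOf b :: (l.map fun p => tokOf p.2).reverse) := by
  induction l with
  | nil => rfl
  | cons p l ih =>
    obtain ⟨o, v⟩ := p
    simp [E, ih]

def wt : BTok → ℤ
  | .v0 => -1 | .v1 => -1 | .opAnd => 1 | .opOr => 1

def wsum (l : List BTok) : ℤ := (l.map wt).sum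

@[simp] lemma wsum_nil : wsum [] = 0 := rfl
@[simp] lemma wsum_cons (t : BTok) (l : List BTok) : wsum (t :: l) = wt t + wsum l := by
  simp [wsum]
@[simp] lemma wsum_append (l₁ l₂ : List BTok) : wsum (l₁ ++ l₂) = wsum l₁ + wsum l₂ := by
  simp [wsum]

lemma wsum_eval {e : List BTok} {b : Bool} (h : BEval e b) : wsum e = -1 := by
  induction h with
  | val0 => rfl
  | val1 => rfl
  | eand h1 h2 ih1 ih2 => simp [ih1, ih2, wt]
  | eor h1 h2 ih1 ih2 => simp [ih1, ih2, wt]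

lemma prefix_aux {e₁ e₂ : List BTok} {b₁ b₂ : Bool} (h1 : BEval e₁ b₁) (h2 : BEval e₂ b₂)
    (ih1 : ∀ u, u <+: e₁ → u ≠ e₁ → 0 ≤ wsum u)
    (ih2 : ∀ u, u <+: e₂ → u ≠ e₂ → 0 ≤ wsum u)
    (x : BTok) (hx : wt x = 1) :
    ∀ u, u <+: (x :: e₁ ++ e₂) → u ≠ x :: e₁ ++ e₂ → 0 ≤ wsum u := by
  rintro u ⟨t, ht⟩ hne
  cases u with
  | nil => simp
  | cons y u =>
    rw [List.cons_append] at ht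
    rw [List.cons_append] at ht
    injection ht with hy ht2
    subst hy
    rcases List.append_eq_append_iff.mp ht2 with ⟨a, he1, hta⟩ | ⟨c, hu, he2⟩
    · subst he1
      rcases eq_or_ne a [] with rfl | ha
      · have hv := wsum_eval h1
        simp at hv
        simp [hx]
        omega
      · have hu0 : 0 ≤ wsum u := ih1 u ⟨a, rfl⟩ (by
          intro h
          have hl := congrArg List.length h
          simp only [List.length_append] at hl
          have hz : a.length = 0 := by omega
          exact ha (List.length_eq_zero_iff.mp hz))
        simp [hx]
        omega
    · subst hu; subst he2
      have hc0 : 0 ≤ wsum c := by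
        rcases eq_or_ne t [] with rfl | htne
        · exfalso; apply hne; simp
        · exact ih2 c ⟨t, rfl⟩ (by
            intro h
            have hl := congrArg List.length h
            simp only [List.length_append] at hl
            have hz : t.length = 0 := by omega
            exact htne (List.length_eq_zero_iff.mp hz))
      have hv := wsum_eval h1
      simp [hx]
      omega

lemma wsum_prefix {e : List BTok} {b : Bool} (h : BEval e b) :
    ∀ u, u <+: e → u ≠ e → 0 ≤ wsum u := by
  induction h with
  | val0 =>
    rintro u ⟨t, ht⟩ hne
    cases u with
    | nil => simp
    | cons x u => simp_all
  | val1 =>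
    rintro u ⟨t, ht⟩ hne
    cases u with
    | nil => simp
    | cons x u => simp_all
  | eand h1 h2 ih1 ih2 => exact prefix_aux h1 h2 ih1 ih2 _ rfl
  | eor h1 h2 ih1 ih2 => exact prefix_aux h1 h2 ih1 ih2 _ rfl

lemma unique_split {e₁ e₂ e₁' e₂' : List BTok} {b₁ b₁' : Bool}
    (h : e₁ ++ e₂ = e₁' ++ e₂') (w1 : BEval e₁ b₁) (w1' : BEval e₁' b₁') :
    e₁ = e₁' ∧ e₂ = e₂' := by
  rcases List.append_eq_append_iff.mp h with ⟨a, he1, _⟩ | ⟨c, he1, _⟩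
  · rcases eq_or_ne a [] with rfl | ha
    · rw [List.append_nil] at he1
      refine ⟨he1.symm, ?_⟩
      subst he1
      exact List.append_cancel_left h
    · exfalso
      have h0 : 0 ≤ wsum e₁ := wsum_prefix w1' e₁ ⟨a, he1.symm⟩ (by
        intro hh; subst hh
        have hl := congrArg List.length he1
        simp only [List.length_append] at hl
        exact ha (List.length_eq_zero_iff.mp (by omega)))
      have := wsum_eval w1
      omega
  · rcases eq_or_ne c [] with rfl | hc
    · rw [List.append_nil] at he1
      refine ⟨he1, ?_⟩
      subst he1
      exact List.append_cancel_left h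
    · exfalso
      have h0 : 0 ≤ wsum e₁' := wsum_prefix w1 e₁' ⟨c, he1.symm⟩ (by
        intro hh; rw [← hh] at he1
        have hl := congrArg List.length he1
        simp only [List.length_append] at hl
        exact hc (List.length_eq_zero_iff.mp (by omega)))
      have := wsum_eval w1'
      omega

lemma inv_and {e : List BTok} {b : Bool} (h : BEval (BTok.opAnd :: e) b) :
    ∃ e₁ e₂ b₁ b₂, e = e₁ ++ e₂ ∧ BEval e₁ b₁ ∧ BEval e₂ b₂ ∧ b = (b₁ && b₂) := by
  cases h with
  | eand h1 h2 => exact ⟨_, _, _, _, rfl, h1, h2, rfl⟩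

lemma inv_or {e : List BTok} {b : Bool} (h : BEval (BTok.opOr :: e) b) :
    ∃ e₁ e₂ b₁ b₂, e = e₁ ++ e₂ ∧ BEval e₁ b₁ ∧ BEval e₂ b₂ ∧ b = (b₁ || b₂) := by
  cases h with
  | eor h1 h2 => exact ⟨_, _, _, _, rfl, h1, h2, rfl⟩

lemma beval_unique {e : List BTok} {b b' : Bool} (h : BEval e b) (h' : BEval e b') : b = b' := by
  induction h generalizing b' with
  | val0 => cases h'; rfl
  | val1 => cases h'; rfl
  | eand h1 h2 ih1 ih2 =>
    obtain ⟨e₁', e₂', b₁', b₂', heq, h1', h2', rfl⟩ := inv_and h'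
    obtain ⟨rfl, rfl⟩ := unique_split heq h1 h1'
    rw [ih1 h1', ih2 h2']
  | eor h1 h2 ih1 ih2 =>
    obtain ⟨e₁', e₂', b₁', b₂', heq, h1', h2', rfl⟩ := inv_or h'
    obtain ⟨rfl, rfl⟩ := unique_split heq h1 h1'
    rw [ih1 h1', ih2 h2']



@[simp] lemma V_nil (b : Bool) : V [] b = b := rfl
@[simp] lemma V_cons (o v : Bool) (l : List (Bool × Bool)) (b : Bool) :
    V ((o, v) :: l) b = bapp o (V l b) v := rfl

lemma V_ones (l : List (Bool × Bool)) (h : ∀ p ∈ l, p.2 = true) : V l true = true := by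
  induction l with
  | nil => rfl
  | cons p l ih =>
    obtain ⟨o, v⟩ := p
    have hv : v = true := h _ List.mem_cons_self
    have := ih (fun q hq => h q (List.mem_cons_of_mem _ hq))
    subst hv
    cases o <;> simp [bapp, this]

lemma bapp_idv (o x : Bool) : bapp o x (idv o) = x := by
  cases o <;> cases x <;> rfl

lemma V_inj : ∀ (os os' vsl : List Bool), os.length = vsl.length → os'.length = vsl.length →
    (∀ (vs : List Bool) (b : Bool), vs.length = vsl.length →
      V (os.zip vs) b = V (os'.zip vs) b) → os = os' := by
  intro os
  induction os with
  | nil =>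
    intro os' vsl h h' _
    cases os' with
    | nil => rfl
    | cons o' os' => simp at h h'; omega
  | cons o os ih =>
    intro os' vsl h h' hV
    cases os' with
    | nil => simp at h h'; omega
    | cons o' os'' =>
      cases vsl with
      | nil => simp at h
      | cons _ vsl =>
      simp only [List.length_cons, Nat.add_left_inj] at h h'
      have hhead : o = o' := by
        have := hV (false :: List.replicate vsl.length true) true (by simp)
        simp only [List.zip_cons_cons, V_cons] at this
        have hz : ∀ l : List Bool, V (l.zip (List.replicate vsl.length true)) true = true := by
          intro l
          apply V_ones
          intro p hp
          have := List.of_mem_zip hp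
          exact List.eq_of_mem_replicate this.2
        rw [hz os, hz os''] at this
        cases o <;> cases o' <;> simp [bapp] at this ⊢
      subst hhead
      congr 1
      apply ih os'' vsl h h'
      intro vs b hvs
      have := hV (idv o :: vs) b (by simp [hvs])
      simp only [List.zip_cons_cons, V_cons, bapp_idv] at this
      exact this


section Machine

def absU : CUpd → ℕ
  | .add m => m.natAbs
  | .reset => 0

variable {n k : ℕ}

noncomputable def bnd (M : CM BTok n k) : ℕ :=
  Finset.univ.sup fun t : BTok × Fin n × (Fin k → Bool) × Fin k =>
    absU (M.u t.1 t.2.1 t.2.2.1 t.2.2.2)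

lemma absU_le (M : CM BTok n k) (x : BTok) (q : Fin n) (b : Fin k → Bool) (i : Fin k) :
    absU (M.u x q b i) ≤ bnd M :=
  Finset.le_sup (f := fun t : BTok × Fin n × (Fin k → Bool) × Fin k =>
    absU (M.u t.1 t.2.1 t.2.2.1 t.2.2.2)) (Finset.mem_univ (x, q, b, i))

lemma run_append (M : CM BTok n k) (xs ys : List BTok) :
    M.run (xs ++ ys) = ys.foldl M.step (M.run xs) := by
  unfold CM.run
  rw [List.foldl_append]

lemma run_bound (M : CM BTok n k) : ∀ (xs : List BTok) (i : Fin k),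
    ((M.run xs).2 i).natAbs ≤ bnd M * xs.length := by
  intro xs
  induction xs using List.reverseRecOn with
  | nil => intro i; simp [CM.run]
  | append_singleton xs x ih =>
    intro i
    rw [run_append]
    simp only [List.foldl_cons, List.foldl_nil, List.length_append, List.length_cons,
      List.length_nil, Nat.zero_add, Nat.mul_add, Nat.mul_one]
    have hb := absU_le M x (M.run xs).1 (zcheck (M.run xs).2) i
    have hi := ih i
    cases hu : M.u x (M.run xs).1 (zcheck (M.run xs).2) i with
    | add m =>
      rw [hu] at hb
      simp only [absU] at hb
      simp only [CM.step, hu, CUpd.apply]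
      omega
    | reset =>
      simp only [CM.step, hu, CUpd.apply]
      omega

lemma exists_big (n k C : ℕ) : ∃ p : ℕ, n * (2 * C * p + 1) ^ k < 2 ^ p := by
  set D : ℕ := n * (2 * C + 1) ^ k with hD
  have h0 : Filter.Tendsto (fun p : ℕ => (p : ℝ) ^ k / 2 ^ p) Filter.atTop (nhds 0) :=
    tendsto_pow_const_div_const_pow_of_one_lt k one_lt_two
  have hpos : (0 : ℝ) < 1 / (D + 1) := by positivity
  have h1 := h0.eventually_lt_const hpos
  obtain ⟨p, hp1, hlt⟩ := ((Filter.eventually_ge_atTop 1).and h1).exists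
  have h2 : (0 : ℝ) < 2 ^ p := by positivity
  have hpk : (0 : ℝ) < (p : ℝ) ^ k := by
    have : (0 : ℝ) < (p : ℝ) := by exact_mod_cast hp1
    positivity
  have h3 : ((D : ℝ) + 1) * ((p : ℝ) ^ k) < 2 ^ p := by
    rw [div_lt_div_iff₀ h2 (by positivity)] at hlt
    nlinarith
  have hnat : D * p ^ k < 2 ^ p := by
    have h4 : ((D : ℝ)) * ((p : ℝ) ^ k) < 2 ^ p := by nlinarith
    exact_mod_cast h4
  refine ⟨p, lt_of_le_of_lt ?_ hnat⟩
  calc n * (2 * C * p + 1) ^ k ≤ n * ((2 * C + 1) * p) ^ k := by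
        apply Nat.mul_le_mul_left
        apply Nat.pow_le_pow_left
        rw [Nat.add_mul, Nat.one_mul]
        exact Nat.add_le_add_left hp1 _
  _ = D * p ^ k := by rw [hD, mul_pow, mul_assoc]

def preTok (os : List Bool) : List BTok := os.map opOf
def sufTok (b : Bool) (vs : List Bool) : List BTok := tokOf b :: (vs.map tokOf).reverse

lemma pre_suf (os vs : List Bool) (h : vs.length = os.length) (b : Bool) :
    preTok os ++ sufTok b vs = E (os.zip vs) b := by
  rw [E_decomp]
  congr 1
  · have h1 : (os.zip vs).map (fun p => opOf p.1) = ((os.zip vs).map Prod.fst).map opOf := by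
      rw [List.map_map]; rfl
    rw [preTok, h1, List.map_fst_zip (show os.length ≤ vs.length by omega)]
  · have h2 : (os.zip vs).map (fun p => tokOf p.2) = ((os.zip vs).map Prod.snd).map tokOf := by
      rw [List.map_map]; rfl
    rw [sufTok, h2, List.map_snd_zip (show vs.length ≤ os.length by omega)]

lemma mem_iff (l : List (Bool × Bool)) (b : Bool) :
    (E l b ∈ {x : List BTok | BEval x true}) ↔ V l b = true := by
  constructor
  · intro h
    exact beval_unique (beval_E l b) h
  · intro h
    have := beval_E l b
    rw [h] at this
    exact this

end Machine

end Stmt14Aux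

open Stmt14Aux in
/-- No real-time general counter machine accepts the language of true
prefix-notation boolean expressions. -/
theorem stmt14 : {x : List BTok | BEval x true} ∉ CL BTok := by
  rintro ⟨n, k, M, hM⟩
  classical
  have key : ∀ p : ℕ, 2 ^ p ≤ n * (2 * bnd M * p + 1) ^ k := by
    intro p
    set C := bnd M with hC
    have hlen : ∀ w : Fin p → Bool, (preTok (List.ofFn w)).length = p := by
      intro w; simp [preTok]
    have hmem : ∀ (w : Fin p → Bool) (i : Fin k),
        (M.run (preTok (List.ofFn w))).2 i ∈ Finset.Icc (-((C * p : ℕ) : ℤ)) ((C * p : ℕ) : ℤ) := by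
      intro w i
      have hb := run_bound M (preTok (List.ofFn w)) i
      rw [hlen w, ← hC] at hb
      rw [Finset.mem_Icc]
      omega
    let Φ : (Fin p → Bool) → Fin n × (Fin k → (Finset.Icc (-((C * p : ℕ) : ℤ)) ((C * p : ℕ) : ℤ))) :=
      fun w => ((M.run (preTok (List.ofFn w))).1, fun i => ⟨_, hmem w i⟩)
    have hinj : Function.Injective Φ := by
      intro w w' hww
      have h1 := congrArg Prod.fst hww
      have h2 := congrArg Prod.snd hww
      simp only [Φ] at h1 h2
      have hrun : M.run (preTok (List.ofFn w)) = M.run (preTok (List.ofFn w')) := by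
        refine Prod.ext h1 (funext fun i => ?_)
        exact congrArg Subtype.val (congrFun h2 i)
      have hacc : ∀ ys, (preTok (List.ofFn w) ++ ys ∈ {x : List BTok | BEval x true}) ↔
          (preTok (List.ofFn w') ++ ys ∈ {x : List BTok | BEval x true}) := by
        intro ys
        have hr : M.run (preTok (List.ofFn w) ++ ys) = M.run (preTok (List.ofFn w') ++ ys) := by
          rw [run_append, run_append, hrun]
        have hacc' : M.accepts (preTok (List.ofFn w) ++ ys) ↔
            M.accepts (preTok (List.ofFn w') ++ ys) := by
          unfold CM.accepts
          rw [hr]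
        rw [hM, hM] at hacc'
        exact hacc'
      have hV : ∀ (vs : List Bool) (b : Bool), vs.length = p →
          V ((List.ofFn w).zip vs) b = V ((List.ofFn w').zip vs) b := by
        intro vs b hvs
        have h := hacc (sufTok b vs)
        rw [pre_suf _ _ (by simp [hvs]) b, pre_suf _ _ (by simp [hvs]) b] at h
        rw [mem_iff, mem_iff] at h
        cases hbv : V ((List.ofFn w).zip vs) b <;>
          cases hbv' : V ((List.ofFn w').zip vs) b <;> simp_all
      have heq := V_inj (List.ofFn w) (List.ofFn w') (List.replicate p true) (by simp) (by simp)
        (fun vs b hvs => hV vs b (by simpa using hvs))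
      exact List.ofFn_injective heq
    have hcard := Fintype.card_le_of_injective Φ hinj
    have hC1 : Fintype.card (↥(Finset.Icc (-((C * p : ℕ) : ℤ)) ((C * p : ℕ) : ℤ))) =
        2 * C * p + 1 := by
      rw [Fintype.card_coe, Int.card_Icc]
      have : 2 * C * p = 2 * (C * p) := by ring
      rw [this]
      generalize C * p = D
      omega
    rw [Fintype.card_fun, Fintype.card_prod, Fintype.card_fun, Fintype.card_bool,
      Fintype.card_fin, Fintype.card_fin, Fintype.card_fin, hC1] at hcard
    exact hcard
  obtain ⟨p, hp⟩ := exists_big n k (bnd M)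
  exact absurd (key p) (not_le.mpr hp)
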